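/- Let ξ be a ℤ_+-valued random variable, not a.s. constant, with E(ξ θ_0^ξ) < ∞ for some θ_0 > 1, E(ξ) < 1, and such that the function θ ↦ E(ξ θ^ξ)/E(θ^ξ) attains the value 1 on (1, θ_0]. Then there exists a unique θ > 1 with E(ξ θ^ξ) = E(θ^ξ). -/

import Mathlib

set_option autoImplicit false

open MeasureTheory ProbabilityTheory Filter

section Aux

variable {Ω : Type*} [MeasureSpace Ω] (P : Measure Ω) [IsProbabilityMeasure P]
variable (ξ : Ω → ℕ)

/-- If `ξ θ^ξ` is integrable and `1 ≤ θ`, then `θ^ξ` is integrable. -/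
lemma aux_int_pow (hmeas : Measurable ξ) {θ : ℝ} (hθ : 1 ≤ θ)
    (h : Integrable (fun ω => (ξ ω : ℝ) * θ ^ ξ ω) P) :
    Integrable (fun ω => θ ^ ξ ω) P := by
  have hθ0 : (0:ℝ) < θ := lt_of_lt_of_le one_pos hθ
  have hbd : Integrable (fun ω => 1 + (ξ ω : ℝ) * θ ^ ξ ω) P := (integrable_const 1).add h
  refine hbd.mono
    ((measurable_from_nat (f := fun n => θ ^ n)).comp hmeas).aestronglyMeasurable
    (ae_of_all _ fun ω => ?_)
  have h1 : (0:ℝ) ≤ θ ^ ξ ω := (pow_pos hθ0 _).le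
  have h3 : (0:ℝ) ≤ (ξ ω : ℝ) * θ ^ ξ ω :=
    mul_nonneg (Nat.cast_nonneg _) (pow_nonneg hθ0.le _)
  have h2 : θ ^ ξ ω ≤ 1 + (ξ ω : ℝ) * θ ^ ξ ω := by
    cases h : ξ ω with
    | zero => simp
    | succ n =>
      have hn : (0:ℝ) ≤ (n:ℝ) := Nat.cast_nonneg n
      push_cast
      nlinarith [mul_nonneg hn (pow_pos hθ0 (n+1)).le, pow_pos hθ0 (n+1)]
  simp only [Real.norm_eq_abs, abs_of_nonneg h1, abs_of_nonneg (by linarith : (0:ℝ) ≤ 1 + (ξ ω : ℝ) * θ ^ ξ ω)]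
  exact h2

/-- Monotonicity of integrability of `ξ θ^ξ` in `θ`. -/
lemma aux_int_mono (hmeas : Measurable ξ) {θ θ' : ℝ} (hθ : 0 ≤ θ) (hle : θ ≤ θ')
    (h : Integrable (fun ω => (ξ ω : ℝ) * θ' ^ ξ ω) P) :
    Integrable (fun ω => (ξ ω : ℝ) * θ ^ ξ ω) P := by
  refine h.mono
    ((measurable_from_nat (f := fun n => (n:ℝ) * θ ^ n)).comp hmeas).aestronglyMeasurable
    (ae_of_all _ fun ω => ?_)
  have h1 : (0:ℝ) ≤ (ξ ω : ℝ) * θ ^ ξ ω :=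
    mul_nonneg (Nat.cast_nonneg _) (pow_nonneg hθ _)
  have h2 : (0:ℝ) ≤ (ξ ω : ℝ) * θ' ^ ξ ω :=
    mul_nonneg (Nat.cast_nonneg _) (pow_nonneg (hθ.trans hle) _)
  simp only [Real.norm_eq_abs, abs_of_nonneg h1, abs_of_nonneg h2]
  exact mul_le_mul_of_nonneg_left (pow_le_pow_left₀ hθ hle _) (Nat.cast_nonneg _)

/-- Key lemma: two distinct tilting parameters give a contradiction with
non-degeneracy. -/
lemma aux_key (hmeas : Measurable ξ) (hnotconst : ¬ ∃ c : ℕ, ∀ᵐ ω ∂P, ξ ω = c)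
    {θ₁ θ₂ : ℝ} (h1 : 1 < θ₁) (h12 : θ₁ < θ₂)
    (hi1 : Integrable (fun ω => (ξ ω : ℝ) * θ₁ ^ ξ ω) P)
    (hi2 : Integrable (fun ω => (ξ ω : ℝ) * θ₂ ^ ξ ω) P)
    (he1 : (∫ ω, (ξ ω : ℝ) * θ₁ ^ ξ ω ∂P) = ∫ ω, θ₁ ^ ξ ω ∂P)
    (he2 : (∫ ω, (ξ ω : ℝ) * θ₂ ^ ξ ω ∂P) = ∫ ω, θ₂ ^ ξ ω ∂P) :
    False := by
  have h01 : (0:ℝ) < θ₁ := lt_trans one_pos h1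
  have h02 : (0:ℝ) < θ₂ := lt_trans h01 h12
  set r : ℝ := θ₂ / θ₁ with hrdef
  have hr : 1 < r := (one_lt_div h01).mpr h12
  have hr0 : (0:ℝ) < r := lt_trans one_pos hr
  have hrθ : θ₁ * r = θ₂ := mul_div_cancel₀ θ₂ (ne_of_gt h01)
  set F : ℕ → ℝ := fun n => ((n:ℝ) - 1) * θ₁ ^ n with hFdef
  set G : ℕ → ℝ := fun n => r ^ n with hGdef
  have hFG : ∀ n, F n * G n = ((n:ℝ) - 1) * θ₂ ^ n := by
    intro n
    simp only [hFdef, hGdef]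
    rw [mul_assoc, ← mul_pow, hrθ]
  -- strict monotonicity
  have hFmono : StrictMono F := by
    apply strictMono_nat_of_lt_succ
    intro n
    simp only [hFdef, Nat.cast_succ, pow_succ]
    have hp : (0:ℝ) < θ₁ ^ n := pow_pos h01 n
    have hn : (0:ℝ) ≤ (n:ℝ) := Nat.cast_nonneg n
    nlinarith [mul_nonneg (mul_nonneg hn (sub_nonneg.mpr h1.le)) hp.le]
  have hGmono : StrictMono G := fun a b h => pow_lt_pow_right₀ hr h
  -- integrability facts
  have hpow1 : Integrable (fun ω => θ₁ ^ ξ ω) P := aux_int_pow P ξ hmeas h1.le hi1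
  have hpow2 : Integrable (fun ω => θ₂ ^ ξ ω) P := aux_int_pow P ξ hmeas (h1.trans h12).le hi2
  have hFfun : (fun ω => F (ξ ω)) = fun ω => (ξ ω : ℝ) * θ₁ ^ ξ ω - θ₁ ^ ξ ω :=
    funext fun ω => by simp only [hFdef]; ring
  have hFGfun : (fun ω => F (ξ ω) * G (ξ ω)) = fun ω => (ξ ω : ℝ) * θ₂ ^ ξ ω - θ₂ ^ ξ ω :=
    funext fun ω => by rw [hFG]; ring
  have hsub1 : Integrable (fun ω => (ξ ω : ℝ) * θ₁ ^ ξ ω - θ₁ ^ ξ ω) P := hi1.sub hpow1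
  have hsub2 : Integrable (fun ω => (ξ ω : ℝ) * θ₂ ^ ξ ω - θ₂ ^ ξ ω) P := hi2.sub hpow2
  have hFint : Integrable (fun ω => F (ξ ω)) P := by rw [hFfun]; exact hsub1
  have hFGint : Integrable (fun ω => F (ξ ω) * G (ξ ω)) P := by rw [hFGfun]; exact hsub2
  have hGint : Integrable (fun ω => G (ξ ω)) P := by
    refine hpow2.mono
      ((measurable_from_nat (f := fun n => r ^ n)).comp hmeas).aestronglyMeasurable
      (ae_of_all _ fun ω => ?_)
    have hrθ2 : r ≤ θ₂ := by
      rw [hrdef, div_le_iff₀ h01]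
      nlinarith
    simp only [Real.norm_eq_abs, hGdef, abs_of_nonneg (pow_pos hr0 _).le,
      abs_of_nonneg (pow_pos h02 _).le]
    exact pow_le_pow_left₀ hr0.le hrθ2 _
  -- zero integrals
  have ha : (∫ ω, F (ξ ω) ∂P) = 0 := by
    rw [hFfun, integral_sub hi1 hpow1, he1, sub_self]
  have hb : (∫ ω, F (ξ ω) * G (ξ ω) ∂P) = 0 := by
    rw [hFGfun, integral_sub hi2 hpow2, he2, sub_self]
  -- the symmetrized product function on Ω × Ω
  set H : Ω × Ω → ℝ :=
    fun z => (F (ξ z.1) - F (ξ z.2)) * (G (ξ z.1) - G (ξ z.2)) with hHdef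
  have hHnonneg : ∀ z, 0 ≤ H z := by
    intro z
    rcases le_total (ξ z.1) (ξ z.2) with h | h
    · have := mul_nonneg (neg_nonneg.mpr (sub_nonpos.mpr (hFmono.monotone h)))
        (neg_nonneg.mpr (sub_nonpos.mpr (hGmono.monotone h)))
      rw [neg_mul_neg] at this
      exact this
    · exact mul_nonneg (sub_nonneg.mpr (hFmono.monotone h)) (sub_nonneg.mpr (hGmono.monotone h))
  -- the four product terms
  have t1 : Integrable (fun z : Ω × Ω => (F (ξ z.1) * G (ξ z.1)) * (1:ℝ)) (P.prod P) :=
    hFGint.mul_prod (integrable_const 1)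
  have t2 : Integrable (fun z : Ω × Ω => (1:ℝ) * (F (ξ z.2) * G (ξ z.2))) (P.prod P) :=
    (integrable_const (1:ℝ)).mul_prod hFGint
  have t3 : Integrable (fun z : Ω × Ω => F (ξ z.1) * G (ξ z.2)) (P.prod P) :=
    hFint.mul_prod hGint
  have t4 : Integrable (fun z : Ω × Ω => G (ξ z.1) * F (ξ z.2)) (P.prod P) :=
    hGint.mul_prod hFint
  have t12 : Integrable
      (fun z : Ω × Ω => (F (ξ z.1) * G (ξ z.1)) * (1:ℝ) + (1:ℝ) * (F (ξ z.2) * G (ξ z.2)))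
      (P.prod P) := t1.add t2
  have t34 : Integrable
      (fun z : Ω × Ω => F (ξ z.1) * G (ξ z.2) + G (ξ z.1) * F (ξ z.2)) (P.prod P) := t3.add t4
  have hHeq : H = fun z =>
      ((F (ξ z.1) * G (ξ z.1)) * (1:ℝ) + (1:ℝ) * (F (ξ z.2) * G (ξ z.2)))
      - (F (ξ z.1) * G (ξ z.2) + G (ξ z.1) * F (ξ z.2)) :=
    funext fun z => by simp only [hHdef]; ring
  have hHint : Integrable H (P.prod P) := by
    rw [hHeq]; exact t12.sub t34
  have hone : (∫ (_ : Ω), (1:ℝ) ∂P) = 1 := by simp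
  have hH0 : (∫ z, H z ∂(P.prod P)) = 0 := by
    rw [hHeq, integral_sub t12 t34, integral_add t1 t2, integral_add t3 t4,
      integral_prod_mul (fun ω => F (ξ ω) * G (ξ ω)) (fun _ => (1:ℝ)),
      integral_prod_mul (fun _ => (1:ℝ)) (fun ω => F (ξ ω) * G (ξ ω)),
      integral_prod_mul (fun ω => F (ξ ω)) (fun ω => G (ξ ω)),
      integral_prod_mul (fun ω => G (ξ ω)) (fun ω => F (ξ ω)),
      ha, hb, hone]
    ring
  have hae0 : H =ᵐ[P.prod P] 0 :=
    (integral_eq_zero_iff_of_nonneg_ae (ae_of_all _ hHnonneg) hHint).mp hH0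
  have haeeq : ∀ᵐ z ∂(P.prod P), ξ z.1 = ξ z.2 := by
    filter_upwards [hae0] with z hz
    by_contra hne
    rcases lt_or_gt_of_ne hne with h | h
    · have : 0 < H z := mul_pos_of_neg_of_neg
        (sub_neg.mpr (hFmono h)) (sub_neg.mpr (hGmono h))
      rw [hz] at this; simp at this
    · have : 0 < H z := mul_pos (sub_pos.mpr (hFmono h)) (sub_pos.mpr (hGmono h))
      rw [hz] at this; simp at this
  have hAE := Measure.ae_ae_of_ae_prod haeeq
  obtain ⟨x, hx⟩ := hAE.exists
  exact hnotconst ⟨ξ x, hx.mono fun y hy => hy.symm⟩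

end Aux

/-- Uniqueness of the exponential tilting parameter: if `ξ` is a non-degenerate
`ℕ`-valued random variable with `E(ξ θ₀^ξ) < ∞` for some `θ₀ > 1`, `E(ξ) < 1`, and the
equation `E(ξ θ^ξ) = E(θ^ξ)` has a solution in `(1, θ₀]`, then there is a unique `θ > 1`
(with `ξ θ^ξ` integrable) satisfying `E(ξ θ^ξ) = E(θ^ξ)`. -/
theorem tilting_parameter_unique
    {Ω : Type*} [MeasureSpace Ω] (P : Measure Ω := volume) [IsProbabilityMeasure P]
    (ξ : Ω → ℕ) (hmeas : Measurable ξ)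
    (hnotconst : ¬ ∃ c : ℕ, ∀ᵐ ω ∂P, ξ ω = c)
    (θ₀ : ℝ) (hθ₀ : 1 < θ₀)
    (hint₀ : Integrable (fun ω => (ξ ω : ℝ) * θ₀ ^ ξ ω) P)
    (hintξ : Integrable (fun ω => (ξ ω : ℝ)) P)
    (hmean : (∫ ω, (ξ ω : ℝ) ∂P) < 1)
    (hattain : ∃ θ ∈ Set.Ioc (1 : ℝ) θ₀,
      (∫ ω, (ξ ω : ℝ) * θ ^ ξ ω ∂P) = ∫ ω, θ ^ ξ ω ∂P) :
    ∃! θ : ℝ, 1 < θ ∧ Integrable (fun ω => (ξ ω : ℝ) * θ ^ ξ ω) P ∧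
      (∫ ω, (ξ ω : ℝ) * θ ^ ξ ω ∂P) = ∫ ω, θ ^ ξ ω ∂P := by
  obtain ⟨θ, ⟨hθ1, hθle⟩, heq⟩ := hattain
  have hintθ : Integrable (fun ω => (ξ ω : ℝ) * θ ^ ξ ω) P :=
    aux_int_mono P ξ hmeas (lt_trans one_pos hθ1).le hθle hint₀
  refine ⟨θ, ⟨hθ1, hintθ, heq⟩, ?_⟩
  rintro y ⟨hy1, hyint, hyeq⟩
  by_contra hne
  rcases lt_or_gt_of_ne hne with h | h
  · exact aux_key P ξ hmeas hnotconst hy1 h hyint hintθ hyeq heq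
  · exact aux_key P ξ hmeas hnotconst hθ1 h hintθ hyint heq hyeq
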